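/- Let X be a Banach space, let 1 ≤ p < ∞, and let (A_m)_{m∈ℤ} be a sequence of bounded linear operators on X admitting an exponential trichotomy with constants C, λ > 0. Then there exists a bounded linear operator G on the Banach space ℓ^p(ℤ,X) such that ‖G‖ ≤ 2C(1+e^{−λ})/(1−e^{−λ}) and, for every y = (y_n)_{n∈ℤ} ∈ ℓ^p(ℤ,X), the sequence x = Gy satisfies x_{n+1} − A_n x_n = y_{n+1} for all n ∈ ℤ. -/

import Mathlib

open scoped ENNReal

/-- The forward products `𝒜(m,n) = A_{m-1} ⋯ A_n` (equal to the identity when `m ≤ n`). -/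
noncomputable def calA {X : Type*} [NormedAddCommGroup X] [NormedSpace ℝ X]
    (A : ℤ → X →L[ℝ] X) (m n : ℤ) : X →L[ℝ] X :=
  (List.range (m - n).toNat).foldl (fun B k => (A (n + (k : ℤ))).comp B)
    (ContinuousLinearMap.id ℝ X)

/-- The sequence `(A_m)_{m ∈ ℤ}` admits an exponential trichotomy with constants `C, lam > 0`.
The projections are `P 0 = P¹` (stable), `P 1 = P²` (unstable) and `P 2 = P³` (central).
For `m ≤ n`, the operator `𝒜(m,n)` (the inverse of `𝒜(n,m)` restricted to `Ker P¹_m`)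
is described implicitly: `w = 𝒜(m,n) P^i_n x` iff `w ∈ Ker P¹_m` and `𝒜(n,m) w = P^i_n x`. -/
def ExpTrichotomy {X : Type*} [NormedAddCommGroup X] [NormedSpace ℝ X]
    (A : ℤ → X →L[ℝ] X) (C lam : ℝ) : Prop :=
  ∃ P : Fin 3 → ℤ → X →L[ℝ] X,
    (∀ m, P 0 m + P 1 m + P 2 m = ContinuousLinearMap.id ℝ X) ∧
    (∀ i m, (P i m).comp (P i m) = P i m) ∧
    (∀ i j m, i ≠ j → (P i m).comp (P j m) = 0) ∧
    (∀ i m, (P i (m + 1)).comp (A m) = (A m).comp (P i m)) ∧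
    (∀ m, Set.BijOn (A m) (LinearMap.ker (P 0 m : X →ₗ[ℝ] X) : Set X)
      (LinearMap.ker (P 0 (m + 1) : X →ₗ[ℝ] X) : Set X)) ∧
    (∀ m n : ℤ, n ≤ m → ‖(calA A m n).comp (P 0 n)‖ ≤ C * Real.exp (-lam * (m - n))) ∧
    (∀ m n : ℤ, m ≤ n → ∀ x w : X, w ∈ LinearMap.ker (P 0 m : X →ₗ[ℝ] X) →
      calA A n m w = P 1 n x → ‖w‖ ≤ C * Real.exp (-lam * (n - m)) * ‖x‖) ∧
    (∀ m n : ℤ, n ≤ m → ‖(calA A m n).comp (P 2 n)‖ ≤ C * Real.exp (-lam * (m - n))) ∧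
    (∀ m n : ℤ, m ≤ n → ∀ x w : X, w ∈ LinearMap.ker (P 0 m : X →ₗ[ℝ] X) →
      calA A n m w = P 2 n x → ‖w‖ ≤ C * Real.exp (-lam * (n - m)) * ‖x‖)

section TrichAux

variable {X : Type*} [NormedAddCommGroup X] [NormedSpace ℝ X]

theorem calA_self (A : ℤ → X →L[ℝ] X) (n : ℤ) : calA A n n = ContinuousLinearMap.id ℝ X := by
  simp [calA]

theorem calA_succ (A : ℤ → X →L[ℝ] X) {m n : ℤ} (h : n ≤ m) :
    calA A (m + 1) n = (A m).comp (calA A m n) := by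
  have h1 : (m + 1 - n).toNat = (m - n).toNat + 1 := by omega
  have h3 : n + ((m - n) ⊔ 0) = m := by omega
  rw [calA, calA, h1, List.range_succ]
  simp [List.foldl_append, h3]

theorem calA_comp (A : ℤ → X →L[ℝ] X) {n k : ℤ} (hnk : n ≤ k) :
    ∀ m : ℤ, k ≤ m → calA A m n = (calA A m k).comp (calA A k n) := by
  refine Int.le_induction ?_ ?_
  · rw [calA_self, ContinuousLinearMap.id_comp]
  · intro m hm ih
    rw [calA_succ A (hnk.trans hm), calA_succ A hm, ih, ContinuousLinearMap.comp_assoc]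

theorem calA_bijOn {A : ℤ → X →L[ℝ] X} {P : Fin 3 → ℤ → X →L[ℝ] X}
    (hbij : ∀ m, Set.BijOn (A m) (LinearMap.ker (P 0 m : X →ₗ[ℝ] X) : Set X)
      (LinearMap.ker (P 0 (m + 1) : X →ₗ[ℝ] X) : Set X))
    {m : ℤ} :
    ∀ n : ℤ, m ≤ n →
      Set.BijOn (calA A n m) (LinearMap.ker (P 0 m : X →ₗ[ℝ] X) : Set X) (LinearMap.ker (P 0 n : X →ₗ[ℝ] X) : Set X) := by
  refine Int.le_induction ?_ ?_
  · rw [calA_self]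
    simpa using Set.bijOn_id (LinearMap.ker (P 0 m : X →ₗ[ℝ] X) : Set X)
  · intro n hn ih
    rw [calA_succ A hn]
    simp only [ContinuousLinearMap.coe_comp']
    exact (hbij n).comp ih

noncomputable def greenW (A : ℤ → X →L[ℝ] X) (P : Fin 3 → ℤ → X →L[ℝ] X) (n k : ℤ) (x : X) : X :=
  haveI : Nonempty X := ⟨0⟩
  Function.invFunOn (calA A k n) (LinearMap.ker (P 0 n : X →ₗ[ℝ] X) : Set X) (P 1 k x)

noncomputable def gF (A : ℤ → X →L[ℝ] X) (P : Fin 3 → ℤ → X →L[ℝ] X) (n k : ℤ) (x : X) : X :=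
  if k ≤ n then calA A n k ((P 0 k + P 2 k) x) else - greenW A P n k x

theorem gF_le {A : ℤ → X →L[ℝ] X} {P : Fin 3 → ℤ → X →L[ℝ] X} {n k : ℤ} (h : k ≤ n) (x : X) :
    gF A P n k x = calA A n k ((P 0 k + P 2 k) x) := if_pos h

theorem gF_gt {A : ℤ → X →L[ℝ] X} {P : Fin 3 → ℤ → X →L[ℝ] X} {n k : ℤ} (h : ¬ k ≤ n) (x : X) :
    gF A P n k x = - greenW A P n k x := if_neg h

end TrichAux


set_option maxHeartbeats 2000000

/-- If `(A_m)_{m∈ℤ}` admits an exponential trichotomy with constants `C, lam > 0` and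
`1 ≤ p < ∞`, then there is a bounded linear operator `G` on `ℓ^p(ℤ, X)` with
`‖G‖ ≤ 2C(1+e^{-lam})/(1-e^{-lam})` such that for every `y ∈ ℓ^p(ℤ,X)` the sequence
`x = G y` satisfies `x_{n+1} - A_n x_n = y_{n+1}` for all `n ∈ ℤ`. -/
theorem trichotomy_admissibility_lp
    {X : Type*} [NormedAddCommGroup X] [NormedSpace ℝ X] [CompleteSpace X]
    (p : ℝ≥0∞) [Fact (1 ≤ p)] (hp : p ≠ ∞)
    (A : ℤ → X →L[ℝ] X) (C lam : ℝ) (hC : 0 < C) (hlam : 0 < lam)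
    (h : ExpTrichotomy A C lam) :
    ∃ G : lp (fun _ : ℤ => X) p →L[ℝ] lp (fun _ : ℤ => X) p,
      ‖G‖ ≤ 2 * C * (1 + Real.exp (-lam)) / (1 - Real.exp (-lam)) ∧
      ∀ y : lp (fun _ : ℤ => X) p, ∀ n : ℤ,
        (G y : ∀ _ : ℤ, X) (n + 1) - A n ((G y : ∀ _ : ℤ, X) n)
          = (y : ∀ _ : ℤ, X) (n + 1) := by
  classical
  haveI : Nonempty X := ⟨0⟩
  obtain ⟨P, hsum, hproj, horth, hcomm, hbij, hb1, hb2, hb3, hb4⟩ := h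
  set r : ℝ := Real.exp (-lam) with hrdef
  have hr0 : 0 < r := Real.exp_pos _
  have hr1 : r < 1 := by
    rw [hrdef]
    exact Real.exp_lt_one_iff.mpr (by linarith)
  -- P 1 maps into ker (P 0)
  have hker1 : ∀ (k : ℤ) (x : X), P 1 k x ∈ LinearMap.ker (P 0 k : X →ₗ[ℝ] X) := by
    intro k x
    have h0 := horth 0 1 k (by decide)
    have h0x := congrArg (fun T : X →L[ℝ] X => T x) h0
    simpa [LinearMap.mem_ker] using h0x
  -- existence of preimages for greenW
  have hWex : ∀ {n k : ℤ}, n ≤ k → ∀ x : X,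
      ∃ w ∈ (LinearMap.ker (P 0 n : X →ₗ[ℝ] X) : Set X), calA A k n w = P 1 k x := by
    intro n k hnk x
    have := (calA_bijOn hbij k hnk).surjOn (hker1 k x)
    simpa [Set.mem_image] using this
  have hWmem : ∀ {n k : ℤ}, n ≤ k → ∀ x : X, greenW A P n k x ∈ LinearMap.ker (P 0 n : X →ₗ[ℝ] X) :=
    fun {n k} hnk x => Function.invFunOn_mem (hWex hnk x)
  have hWeq : ∀ {n k : ℤ}, n ≤ k → ∀ x : X, calA A k n (greenW A P n k x) = P 1 k x :=
    fun {n k} hnk x => Function.invFunOn_eq (hWex hnk x)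
  have hWuniq : ∀ {n k : ℤ}, n ≤ k → ∀ (x : X) (w : X), w ∈ LinearMap.ker (P 0 n : X →ₗ[ℝ] X) →
      calA A k n w = P 1 k x → w = greenW A P n k x := by
    intro n k hnk x w hw heq
    exact (calA_bijOn hbij k hnk).injOn hw (hWmem hnk x) (by rw [heq, hWeq hnk x])
  -- additivity and homogeneity of gF
  have hadd : ∀ (n k : ℤ) (x x' : X), gF A P n k (x + x') = gF A P n k x + gF A P n k x' := by
    intro n k x x'
    by_cases hk : k ≤ n
    · simp [gF_le hk, map_add]
    · have hnk : n ≤ k := le_of_not_ge hk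
      rw [gF_gt hk, gF_gt hk, gF_gt hk]
      have huni : greenW A P n k x + greenW A P n k x' = greenW A P n k (x + x') := by
        refine hWuniq hnk (x + x') _ ?_ ?_
        · exact add_mem (hWmem hnk x) (hWmem hnk x')
        · rw [map_add, hWeq hnk x, hWeq hnk x', ← map_add]
      rw [← huni, neg_add]
  have hsmul : ∀ (n k : ℤ) (c : ℝ) (x : X), gF A P n k (c • x) = c • gF A P n k x := by
    intro n k c x
    by_cases hk : k ≤ n
    · simp [gF_le hk, map_smul]
    · have hnk : n ≤ k := le_of_not_ge hk
      rw [gF_gt hk, gF_gt hk]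
      have huni : c • greenW A P n k x = greenW A P n k (c • x) := by
        refine hWuniq hnk (c • x) _ ?_ ?_
        · exact Submodule.smul_mem _ c (hWmem hnk x)
        · rw [map_smul, hWeq hnk x, ← map_smul]
      rw [← huni, smul_neg]
  -- norm bound
  have hnorm : ∀ (n k : ℤ) (x : X),
      ‖gF A P n k x‖ ≤ 2 * C * r ^ (n - k).natAbs * ‖x‖ := by
    intro n k x
    by_cases hk : k ≤ n
    · have e1 : Real.exp (-lam * ((n : ℝ) - (k : ℝ))) = r ^ (n - k).natAbs := by
        have h0 : (0 : ℝ) ≤ (n : ℝ) - k := by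
          have : (0 : ℤ) ≤ n - k := by omega
          exact_mod_cast this
        have h2 : (((n - k).natAbs : ℕ) : ℝ) = (n : ℝ) - k := by
          rw [Nat.cast_natAbs]
          push_cast
          rw [abs_of_nonneg h0]
        rw [← h2, show -lam * ((((n - k).natAbs : ℕ)) : ℝ)
            = (((n - k).natAbs : ℕ) : ℝ) * (-lam) from mul_comm _ _, Real.exp_nat_mul]
      rw [gF_le hk]
      have hx1 : ‖calA A n k (P 0 k x)‖ ≤ C * Real.exp (-lam * ((n : ℝ) - (k : ℝ))) * ‖x‖ :=
        ContinuousLinearMap.le_of_opNorm_le _ (hb1 n k hk) x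
      have hx2 : ‖calA A n k (P 2 k x)‖ ≤ C * Real.exp (-lam * ((n : ℝ) - (k : ℝ))) * ‖x‖ :=
        ContinuousLinearMap.le_of_opNorm_le _ (hb3 n k hk) x
      have : (P 0 k + P 2 k) x = P 0 k x + P 2 k x := rfl
      rw [this, map_add]
      calc ‖calA A n k (P 0 k x) + calA A n k (P 2 k x)‖
          ≤ ‖calA A n k (P 0 k x)‖ + ‖calA A n k (P 2 k x)‖ := norm_add_le _ _
        _ ≤ C * Real.exp (-lam * ((n : ℝ) - (k : ℝ))) * ‖x‖
            + C * Real.exp (-lam * ((n : ℝ) - (k : ℝ))) * ‖x‖ := add_le_add hx1 hx2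
        _ = 2 * C * r ^ (n - k).natAbs * ‖x‖ := by rw [e1]; ring
    · have hnk : n ≤ k := le_of_not_ge hk
      have e1 : Real.exp (-lam * ((k : ℝ) - (n : ℝ))) = r ^ (n - k).natAbs := by
        have hna : (n - k).natAbs = (k - n).natAbs := by omega
        have h0 : (0 : ℝ) ≤ (k : ℝ) - n := by
          have : (0 : ℤ) ≤ k - n := by omega
          exact_mod_cast this
        have h2 : (((k - n).natAbs : ℕ) : ℝ) = (k : ℝ) - n := by
          rw [Nat.cast_natAbs]
          push_cast
          rw [abs_of_nonneg h0]
        rw [hna, ← h2, show -lam * ((((k - n).natAbs : ℕ)) : ℝ)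
            = (((k - n).natAbs : ℕ) : ℝ) * (-lam) from mul_comm _ _, Real.exp_nat_mul]
      have hw := hb2 n k hnk x (greenW A P n k x) (hWmem hnk x) (hWeq hnk x)
      rw [gF_gt hk, norm_neg]
      rw [e1] at hw
      have hnn : 0 ≤ r ^ (n - k).natAbs * ‖x‖ :=
        mul_nonneg (pow_nonneg hr0.le _) (norm_nonneg _)
      nlinarith [hw, mul_nonneg hC.le hnn]
  -- the recurrence relation for the kernel
  have hrec : ∀ (n k : ℤ) (x : X),
      gF A P (n + 1) k x - A n (gF A P n k x) = if k = n + 1 then x else 0 := by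
    intro n k x
    rcases lt_trichotomy k (n + 1) with hk | hk | hk
    · have hk' : k ≤ n := by omega
      rw [if_neg (by omega), gF_le hk', gF_le (by omega : k ≤ n + 1), calA_succ A hk']
      simp
    · subst hk
      rw [if_pos rfl, gF_le le_rfl, calA_self, gF_gt (by omega : ¬ (n + 1 : ℤ) ≤ n)]
      have hA : A n (greenW A P n (n + 1) x) = P 1 (n + 1) x := by
        have h1 := hWeq (by omega : n ≤ n + 1) x
        rw [calA_succ A le_rfl, calA_self, ContinuousLinearMap.comp_id] at h1
        exact h1
      rw [map_neg, hA]
      have hs := congrArg (fun T : X →L[ℝ] X => T x) (hsum (n + 1))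
      simp only [ContinuousLinearMap.add_apply, ContinuousLinearMap.coe_id', id_eq] at hs
      simp only [ContinuousLinearMap.coe_id', id_eq, ContinuousLinearMap.add_apply,
        sub_neg_eq_add]
      abel_nf at hs ⊢
      exact hs
    · have h1 : ¬ k ≤ n + 1 := by omega
      have h2 : ¬ k ≤ n := by omega
      rw [if_neg (by omega), gF_gt h1, gF_gt h2, map_neg]
      have hAn : calA A (n + 1) n = A n := by
        rw [calA_succ A le_rfl, calA_self, ContinuousLinearMap.comp_id]
      have hkey : A n (greenW A P n k x) = greenW A P (n + 1) k x := by
        refine hWuniq (by omega : n + 1 ≤ k) x _ ?_ ?_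
        · exact (hbij n).mapsTo (hWmem (by omega : n ≤ k) x)
        · have hcompEq := calA_comp A (le_of_lt (by omega : n < n + 1)) k (by omega : n + 1 ≤ k)
          have h3 := hWeq (by omega : n ≤ k) x
          rw [hcompEq, hAn] at h3
          exact h3
      rw [hkey]
      simp
  -- the ℓ^p machinery
  have hp0 : p ≠ 0 := by
    have h1p : (1 : ℝ≥0∞) ≤ p := Fact.out
    intro h0
    rw [h0] at h1p
    simp at h1p
  have hpr : 0 < p.toReal := ENNReal.toReal_pos hp0 hp
  set κ : ℤ → ℝ := fun j => 2 * C * r ^ j.natAbs with hκdef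
  have hκ0 : ∀ j, 0 ≤ κ j := fun j => mul_nonneg (by linarith) (pow_nonneg hr0.le _)
  have hκsum : HasSum κ (2 * C * (1 + r) / (1 - r)) := by
    have hg := hasSum_geometric_of_lt_one hr0.le hr1
    have h1 : HasSum (fun i : ℕ => κ (i : ℤ)) (2 * C * (1 - r)⁻¹) := by
      have e : (fun i : ℕ => κ (i : ℤ)) = fun i : ℕ => 2 * C * r ^ i := by
        funext i
        simp [hκdef]
      rw [e]
      exact hg.mul_left (2 * C)
    have h2 : HasSum (fun i : ℕ => κ (-((i : ℤ) + 1))) (2 * C * r * (1 - r)⁻¹) := by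
      have e : (fun i : ℕ => κ (-((i : ℤ) + 1))) = fun i : ℕ => 2 * C * r * r ^ i := by
        funext i
        have hna : (-((i : ℤ) + 1)).natAbs = i + 1 := by omega
        simp only [hκdef, hna, pow_succ]
        ring
      rw [e]
      exact hg.mul_left (2 * C * r)
    have h3 := h1.of_nat_of_neg_add_one h2
    convert h3 using 1
    have h1r : (1 : ℝ) - r ≠ 0 := by linarith
    field_simp
  have hshift : ∀ (y : lp (fun _ : ℤ => X) p) (j : ℤ),
      Summable fun n : ℤ => ‖(y : ∀ _ : ℤ, X) (n - j)‖ ^ p.toReal := by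
    intro y j
    have hs := (lp.memℓp y).summable hpr
    exact ((Equiv.subRight j).summable_iff
      (f := fun m : ℤ => ‖(y : ∀ _ : ℤ, X) m‖ ^ p.toReal)).mpr hs
  have hptbound : ∀ (j : ℤ) (y : lp (fun _ : ℤ => X) p) (n : ℤ),
      ‖gF A P n (n - j) ((y : ∀ _ : ℤ, X) (n - j))‖ ≤ κ j * ‖(y : ∀ _ : ℤ, X) (n - j)‖ := by
    intro j y n
    have h0 := hnorm n (n - j) ((y : ∀ _ : ℤ, X) (n - j))
    have e : (n - (n - j)).natAbs = j.natAbs := by omega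
    rw [e] at h0
    simpa [hκdef] using h0
  have hbpt : ∀ (j : ℤ) (y : lp (fun _ : ℤ => X) p) (n : ℤ),
      ‖gF A P n (n - j) ((y : ∀ _ : ℤ, X) (n - j))‖ ^ p.toReal
        ≤ κ j ^ p.toReal * ‖(y : ∀ _ : ℤ, X) (n - j)‖ ^ p.toReal := by
    intro j y n
    rw [← Real.mul_rpow (hκ0 j) (norm_nonneg _)]
    exact Real.rpow_le_rpow (norm_nonneg _) (hptbound j y n) hpr.le
  have hmem : ∀ (j : ℤ) (y : lp (fun _ : ℤ => X) p),
      Memℓp (fun n : ℤ => gF A P n (n - j) ((y : ∀ _ : ℤ, X) (n - j))) p := by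
    intro j y
    apply memℓp_gen
    exact Summable.of_nonneg_of_le (fun n => Real.rpow_nonneg (norm_nonneg _) _) (hbpt j y)
      ((hshift y j).mul_left _)
  have htsum : ∀ (j : ℤ) (y : lp (fun _ : ℤ => X) p),
      ∑' n : ℤ, ‖gF A P n (n - j) ((y : ∀ _ : ℤ, X) (n - j))‖ ^ p.toReal
        ≤ (κ j * ‖y‖) ^ p.toReal := by
    intro j y
    have hsum1 : Summable fun n : ℤ =>
        ‖gF A P n (n - j) ((y : ∀ _ : ℤ, X) (n - j))‖ ^ p.toReal := (hmem j y).summable hpr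
    calc ∑' n : ℤ, ‖gF A P n (n - j) ((y : ∀ _ : ℤ, X) (n - j))‖ ^ p.toReal
        ≤ ∑' n : ℤ, κ j ^ p.toReal * ‖(y : ∀ _ : ℤ, X) (n - j)‖ ^ p.toReal :=
          Summable.tsum_le_tsum (hbpt j y) hsum1 ((hshift y j).mul_left _)
      _ = κ j ^ p.toReal * ∑' n : ℤ, ‖(y : ∀ _ : ℤ, X) (n - j)‖ ^ p.toReal := tsum_mul_left
      _ = κ j ^ p.toReal * ∑' m : ℤ, ‖(y : ∀ _ : ℤ, X) m‖ ^ p.toReal := by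
          congr 1
          exact (Equiv.subRight j).tsum_eq fun m : ℤ => ‖(y : ∀ _ : ℤ, X) m‖ ^ p.toReal
      _ = (κ j * ‖y‖) ^ p.toReal := by
          rw [← lp.norm_rpow_eq_tsum hpr, Real.mul_rpow (hκ0 j) (norm_nonneg _)]
  let Gop : ℤ → (lp (fun _ : ℤ => X) p →L[ℝ] lp (fun _ : ℤ => X) p) := fun j =>
    LinearMap.mkContinuous
      { toFun := fun y => (⟨fun n => gF A P n (n - j) ((y : ∀ _ : ℤ, X) (n - j)), hmem j y⟩ :
          lp (fun _ : ℤ => X) p)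
        map_add' := by
          intro y z
          apply lp.ext
          funext n
          simp only [lp.coeFn_add, Pi.add_apply]
          exact hadd _ _ _ _
        map_smul' := by
          intro c y
          apply lp.ext
          funext n
          simp only [lp.coeFn_smul, Pi.smul_apply, RingHom.id_apply]
          exact hsmul _ _ _ _ }
      (κ j)
      (fun y => lp.norm_le_of_tsum_le hpr (mul_nonneg (hκ0 j) (norm_nonneg _)) (htsum j y))
  have hGopnorm : ∀ j : ℤ, ‖Gop j‖ ≤ κ j := fun j =>
    LinearMap.mkContinuous_norm_le _ (hκ0 j) _
  have hGsum : Summable Gop := Summable.of_norm_bounded hκsum.summable hGopnorm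
  refine ⟨∑' j, Gop j, ?_, ?_⟩
  · exact tsum_of_norm_bounded hκsum hGopnorm
  · intro y n
    have hGy : ∀ m : ℤ, HasSum (fun k : ℤ => gF A P m k ((y : ∀ _ : ℤ, X) k))
        (((∑' j, Gop j) y : ∀ _ : ℤ, X) m) := by
      intro m
      have h1 : HasSum (fun j : ℤ => Gop j y) ((∑' j, Gop j) y) :=
        (ContinuousLinearMap.apply ℝ (lp (fun _ : ℤ => X) p) y).hasSum hGsum.hasSum
      let ev : lp (fun _ : ℤ => X) p →L[ℝ] X := LinearMap.mkContinuous
        { toFun := fun f => (f : ∀ _ : ℤ, X) m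
          map_add' := fun f g => by simp [lp.coeFn_add]
          map_smul' := fun c f => by simp [lp.coeFn_smul] }
        1 (fun f => by
          rw [one_mul]
          exact lp.norm_apply_le_norm hp0 f m)
      have h2 := ev.hasSum h1
      have h3 : HasSum (fun j : ℤ => gF A P m (m - j) ((y : ∀ _ : ℤ, X) (m - j)))
          (((∑' j, Gop j) y : ∀ _ : ℤ, X) m) := h2
      exact ((Equiv.subLeft m).hasSum_iff
        (f := fun k : ℤ => gF A P m k ((y : ∀ _ : ℤ, X) k))).mp h3
    have S1 := hGy (n + 1)
    have S3 := (A n).hasSum (hGy n)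
    have S4 := S1.sub S3
    have e4 : (fun k : ℤ => gF A P (n + 1) k ((y : ∀ _ : ℤ, X) k)
        - A n (gF A P n k ((y : ∀ _ : ℤ, X) k)))
        = fun k : ℤ => if k = n + 1 then (y : ∀ _ : ℤ, X) (n + 1) else 0 := by
      funext k
      rw [hrec n k ((y : ∀ _ : ℤ, X) k)]
      by_cases hk : k = n + 1 <;> simp [hk]
    rw [e4] at S4
    exact S4.unique (hasSum_ite_eq (n + 1) _)
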